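/- Let X be a Gaussian random variable with mean μ and variance σ² > 0. Then E[log(1 + e^X)] ≤ log(1 + e^{μ + σ²/2}). -/

import Mathlib

open MeasureTheory ProbabilityTheory Real
open scoped NNReal ENNReal

lemma exp_mul_gaussianPDFReal (μ : ℝ) (v : ℝ≥0) (hv : v ≠ 0) (x : ℝ) :
    rexp x * gaussianPDFReal μ v x
      = rexp (μ + (v : ℝ) / 2) * gaussianPDFReal (μ + v) v x := by
  have hv' : (0 : ℝ) < (v : ℝ) := by positivity
  simp only [gaussianPDFReal]
  rw [show rexp x * ((√(2 * π * v))⁻¹ * rexp (-(x - μ) ^ 2 / (2 * v)))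
        = (√(2 * π * v))⁻¹ * (rexp x * rexp (-(x - μ) ^ 2 / (2 * v))) by ring,
      show rexp (μ + (v : ℝ) / 2) * ((√(2 * π * v))⁻¹ * rexp (-(x - (μ + v)) ^ 2 / (2 * v)))
        = (√(2 * π * v))⁻¹ * (rexp (μ + (v : ℝ) / 2) * rexp (-(x - (μ + v)) ^ 2 / (2 * v))) by
        ring,
      ← Real.exp_add, ← Real.exp_add]
  congr 1
  field_simp
  ring

lemma gaussianReal_withDensity (μ : ℝ) {v : ℝ≥0} (hv : v ≠ 0) :
    gaussianReal μ v
      = volume.withDensity (fun x => ((gaussianPDFReal μ v x).toNNReal : ℝ≥0∞)) := by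
  rw [gaussianReal_of_var_ne_zero μ hv]
  congr 1

lemma integrable_exp_gaussianReal (μ : ℝ) {v : ℝ≥0} (hv : v ≠ 0) :
    Integrable rexp (gaussianReal μ v) := by
  rw [gaussianReal_withDensity μ hv,
    integrable_withDensity_iff ((measurable_gaussianPDFReal μ v).real_toNNReal.coe_nnreal_ennreal) (by simp [ENNReal.coe_lt_top])]
  simp only [ENNReal.coe_toReal, Real.coe_toNNReal _ (gaussianPDFReal_nonneg μ v _)]
  have : (fun x => rexp x * gaussianPDFReal μ v x)
      = fun x => rexp (μ + (v : ℝ) / 2) * gaussianPDFReal (μ + v) v x := by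
    ext x; exact exp_mul_gaussianPDFReal μ v hv x
  rw [this]
  exact (integrable_gaussianPDFReal _ _).const_mul _

lemma integral_exp_gaussianReal (μ : ℝ) {v : ℝ≥0} (hv : v ≠ 0) :
    ∫ x, rexp x ∂(gaussianReal μ v) = rexp (μ + (v : ℝ) / 2) := by
  rw [gaussianReal_withDensity μ hv,
    integral_withDensity_eq_integral_smul ((measurable_gaussianPDFReal μ v).real_toNNReal) rexp]
  have : (fun x => (gaussianPDFReal μ v x).toNNReal • rexp x)
      = fun x => rexp (μ + (v : ℝ) / 2) * gaussianPDFReal (μ + v) v x := by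
    ext x
    rw [NNReal.smul_def, smul_eq_mul, Real.coe_toNNReal _ (gaussianPDFReal_nonneg μ v _),
      mul_comm]
    exact exp_mul_gaussianPDFReal μ v hv x
  rw [this, integral_const_mul, integral_gaussianPDFReal_eq_one _ hv, mul_one]

/-- **binary special case of the ISDA bound.** If `X ~ N(μ, σ²)` with
`σ² > 0`, then `E[log(1 + e^X)] ≤ log(1 + e^{μ + σ²/2})`. -/
theorem expected_softplus_gaussian_upper_bound {Ω : Type*} [MeasurableSpace Ω]
    (P : Measure Ω) [IsProbabilityMeasure P] (X : Ω → ℝ) (μ : ℝ) (σ2 : ℝ≥0) (hσ : 0 < σ2)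
    (hX : P.map X = gaussianReal μ σ2) :
    ∫ ω, Real.log (1 + Real.exp (X ω)) ∂P ≤ Real.log (1 + Real.exp (μ + (σ2 : ℝ) / 2)) := by
  have hσ' : σ2 ≠ 0 := hσ.ne'
  -- X is a.e.-measurable
  have hXm : AEMeasurable X P := by
    by_contra h
    rw [Measure.map_of_not_aemeasurable h] at hX
    have : (0 : Measure ℝ) Set.univ = (gaussianReal μ σ2) Set.univ := by rw [hX]
    simp at this
  -- integrability of exp ∘ X
  have hexp_int : Integrable (fun ω => rexp (X ω)) P := by
    have := (integrable_map_measure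
      (Real.continuous_exp.aestronglyMeasurable) hXm).1
      (by rw [hX]; exact integrable_exp_gaussianReal μ hσ')
    exact this
  -- value of E[exp X]
  have hexp_val : ∫ ω, rexp (X ω) ∂P = rexp (μ + (σ2 : ℝ) / 2) := by
    rw [← integral_map hXm Real.continuous_exp.aestronglyMeasurable, hX]
    exact integral_exp_gaussianReal μ hσ'
  -- integrability of the softplus
  have hlog_int : Integrable (fun ω => Real.log (1 + rexp (X ω))) P := by
    refine hexp_int.mono' ?_ ?_
    · exact ((Real.measurable_log.comp
        (measurable_const.add Real.measurable_exp)).comp_aemeasurable hXm).aestronglyMeasurable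
    · filter_upwards with ω
      have h1 : (0:ℝ) < 1 + rexp (X ω) := by positivity
      rw [Real.norm_eq_abs, abs_of_nonneg (Real.log_nonneg (by linarith [Real.exp_pos (X ω)]))]
      calc Real.log (1 + rexp (X ω)) ≤ (1 + rexp (X ω)) - 1 :=
            Real.log_le_sub_one_of_pos h1
        _ = rexp (X ω) := by ring
  -- Jensen's inequality with the concave function log on [1, ∞)
  have hconc : ConcaveOn ℝ (Set.Ici (1:ℝ)) Real.log :=
    strictConcaveOn_log_Ioi.concaveOn.subset
      (fun x hx => Set.mem_Ioi.2 (lt_of_lt_of_le zero_lt_one (Set.mem_Ici.1 hx))) (convex_Ici 1)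
  have hjensen := hconc.le_map_integral
    (Real.continuousOn_log.mono (fun x hx => by
      simp only [Set.mem_compl_iff, Set.mem_singleton_iff]
      exact fun h => by simp_all; linarith))
    isClosed_Ici
    (Filter.Eventually.of_forall fun ω =>
      Set.mem_Ici.2 (le_add_of_nonneg_right (Real.exp_pos (X ω)).le))
    ((integrable_const (1:ℝ)).add hexp_int)
    (by exact hlog_int)
  calc ∫ ω, Real.log (1 + rexp (X ω)) ∂P
      ≤ Real.log (∫ ω, (1 + rexp (X ω)) ∂P) := hjensen
    _ = Real.log (1 + rexp (μ + (σ2 : ℝ) / 2)) := by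
        rw [integral_add (integrable_const 1) hexp_int, integral_const, measureReal_def, measure_univ,
          ENNReal.toReal_one, one_smul, hexp_val]
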